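/- arXiv:1208.5960 — 6 statements merged into one kernel-verified Lean document; each statement's English description precedes it below -/
import Mathlib

section
/- Let x, s ∈ ℝⁿ with x, s > 0, and suppose Δx, Δs ∈ ℝⁿ satisfy SΔx + XΔs = ξ + r (componentwise: s_j Δx_j + x_j Δs_j = ξ_j + r_j) and ΔxᵀΔs ≥ 0. Then ‖ΔXΔS e‖₁ = Σⱼ |Δx_j Δs_j| ≤ Σⱼ (x_j s_j)⁻¹ (ξ_j + r_j)². -/
open Finset

/-- The 1-norm of the second-order term ΔXΔSe is bounded by
Σⱼ (xⱼsⱼ)⁻¹(ξⱼ+rⱼ)². -/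
theorem second_order_term_one_norm_bound
    {n : ℕ} (x s dx ds ξ r : Fin n → ℝ)
    (hx : ∀ j, 0 < x j) (hs : ∀ j, 0 < s j)
    (heq : ∀ j, s j * dx j + x j * ds j = ξ j + r j)
    (hdxds : 0 ≤ ∑ j, dx j * ds j) :
    ∑ j, |dx j * ds j| ≤ ∑ j, (x j * s j)⁻¹ * (ξ j + r j) ^ 2 := by
  set f : Fin n → ℝ := fun j => dx j * ds j with hf
  set g : Fin n → ℝ := fun j => (x j * s j)⁻¹ * (ξ j + r j) ^ 2 with hg
  have hgpos : ∀ j, 0 ≤ g j := fun j =>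
    mul_nonneg (inv_nonneg.mpr (mul_pos (hx j) (hs j)).le) (sq_nonneg _)
  -- key per-index bound when f j ≥ 0
  have hkey : ∀ j, 0 ≤ f j → f j ≤ g j / 4 := by
    intro j hfj
    have hxs : (0:ℝ) < x j * s j := mul_pos (hx j) (hs j)
    have h1 : 4 * (x j * s j) * f j ≤ (ξ j + r j) ^ 2 := by
      show 4 * (x j * s j) * (dx j * ds j) ≤ (ξ j + r j) ^ 2
      have h2 : (ξ j + r j) ^ 2 = (s j * dx j + x j * ds j) ^ 2 := by rw [heq j]
      nlinarith [sq_nonneg (s j * dx j - x j * ds j)]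
    have : f j ≤ (ξ j + r j) ^ 2 / (4 * (x j * s j)) := by
      rw [le_div_iff₀ (by positivity)]
      linarith
    calc f j ≤ (ξ j + r j) ^ 2 / (4 * (x j * s j)) := this
      _ = g j / 4 := by
          show _ = (x j * s j)⁻¹ * (ξ j + r j) ^ 2 / 4
          rw [inv_mul_eq_div, div_div, mul_comm]
  set P := Finset.univ.filter (fun j => 0 ≤ f j) with hP
  have hsplit : ∑ j, f j = ∑ j ∈ P, f j + ∑ j ∈ Pᶜ, f j :=
    (Finset.sum_add_sum_compl P f).symm
  have habs : ∑ j, |f j| = ∑ j ∈ P, f j + ∑ j ∈ Pᶜ, (-f j) := by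
    rw [← Finset.sum_add_sum_compl P (fun j => |f j|)]
    congr 1
    · exact Finset.sum_congr rfl fun j hj => abs_of_nonneg (Finset.mem_filter.mp hj).2
    · refine Finset.sum_congr rfl fun j hj => ?_
      have : ¬ (0 ≤ f j) := by
        simpa [hP] using (Finset.mem_compl.mp hj)
      exact abs_of_neg (lt_of_not_ge this)
  have hneg : ∑ j ∈ Pᶜ, (-f j) ≤ ∑ j ∈ P, f j := by
    have : ∑ j ∈ Pᶜ, (-f j) = - ∑ j ∈ Pᶜ, f j := by rw [Finset.sum_neg_distrib]
    rw [this]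
    have := hdxds
    rw [hsplit] at this
    linarith
  have hPg : ∑ j ∈ P, f j ≤ ∑ j ∈ P, g j / 4 :=
    Finset.sum_le_sum fun j hj => hkey j (Finset.mem_filter.mp hj).2
  have hPgall : ∑ j ∈ P, g j ≤ ∑ j, g j :=
    Finset.sum_le_sum_of_subset_of_nonneg (Finset.subset_univ P)
      (fun j _ _ => hgpos j)
  have hsum4 : ∑ j ∈ P, g j / 4 = (∑ j ∈ P, g j) / 4 := by
    rw [Finset.sum_div]
  calc ∑ j, |f j| = ∑ j ∈ P, f j + ∑ j ∈ Pᶜ, (-f j) := habs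
    _ ≤ 2 * ∑ j ∈ P, f j := by linarith
    _ ≤ 2 * ((∑ j ∈ P, g j) / 4) := by
        have := hPg; rw [hsum4] at this; linarith
    _ ≤ ∑ j, g j := by
        have h0 : 0 ≤ ∑ j, g j := Finset.sum_nonneg fun j _ => hgpos j
        linarith
end

section
/- Suppose (x,y,s) lies in N₂(θ) (i.e. feasible with ‖XSe - μe‖ ≤ θμ, μ = xᵀs/n > 0) and the inexact Newton direction (Δx, Δy, Δs) satisfies AΔx = 0, -QΔx + AᵀΔy + Δs = 0, SΔx + XΔs = ξ + r with ξ = σμe - XSe, σ = 1 - β/√n, and ‖r‖₂ ≤ δ‖ξ‖₂. Then ‖ΔXΔSe‖₂ ≤ (1+δ)²(θ² + β²)μ / (1-θ). -/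
open Matrix Finset

set_option maxHeartbeats 1000000 in
/-- Lemma 3.1 (short-step): bound on ‖ΔXΔSe‖₂ for the inexact Newton direction. -/
theorem dXdSe_two_norm_bound_short_step
    {m n : ℕ} (hn : 0 < n)
    (A : Matrix (Fin m) (Fin n) ℝ) (Q : Matrix (Fin n) (Fin n) ℝ)
    (hQ : Q.PosSemidef)
    (x s dx ds ξ r : Fin n → ℝ) (dy : Fin m → ℝ) (μ θ β δ σ : ℝ)
    (hx : ∀ j, 0 < x j) (hs : ∀ j, 0 < s j)
    (hμ : μ = (∑ j, x j * s j) / n) (hμpos : 0 < μ)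
    (hθ : θ ∈ Set.Ioo (0 : ℝ) 1) (hβ : β ∈ Set.Ioo (0 : ℝ) 1)
    (hδ : δ ∈ Set.Ioo (0 : ℝ) 1)
    (hN2 : Real.sqrt (∑ j, (x j * s j - μ) ^ 2) ≤ θ * μ)
    (hσ : σ = 1 - β / Real.sqrt n)
    (hξ : ∀ j, ξ j = σ * μ - x j * s j)
    (h1 : A.mulVec dx = 0)
    (h2 : -(Q.mulVec dx) + Aᵀ.mulVec dy + ds = 0)
    (h3 : ∀ j, s j * dx j + x j * ds j = ξ j + r j)
    (hr : Real.sqrt (∑ j, (r j) ^ 2) ≤ δ * Real.sqrt (∑ j, (ξ j) ^ 2)) :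
    Real.sqrt (∑ j, (dx j * ds j) ^ 2)
      ≤ (1 + δ) ^ 2 * (θ ^ 2 + β ^ 2) * μ / (1 - θ) := by
  obtain ⟨hθ0, hθ1⟩ := hθ
  obtain ⟨hβ0, hβ1⟩ := hβ
  obtain ⟨hδ0, hδ1⟩ := hδ
  have hn' : (0:ℝ) < n := by exact_mod_cast hn
  have hθμ : 0 < θ * μ := mul_pos hθ0 hμpos
  have h1θ : (0:ℝ) < 1 - θ := by linarith
  -- sum of deviations is zero
  have hsum : ∑ j, (x j * s j - μ) = 0 := by
    rw [Finset.sum_sub_distrib, Finset.sum_const, Finset.card_univ, Fintype.card_fin,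
      nsmul_eq_mul, hμ]
    field_simp
    ring
  -- sum of squared deviations
  have hE0 : (0:ℝ) ≤ ∑ j, (x j * s j - μ)^2 := Finset.sum_nonneg fun i _ => sq_nonneg _
  have hE : ∑ j, (x j * s j - μ)^2 ≤ (θ*μ)^2 := by
    have := Real.sq_sqrt hE0
    nlinarith [Real.sqrt_nonneg (∑ j, (x j * s j - μ)^2)]
  -- pointwise lower bound
  have hlow : ∀ j, (1-θ)*μ ≤ x j * s j := by
    intro j
    have h1' : (x j * s j - μ)^2 ≤ (θ*μ)^2 :=
      le_trans (Finset.single_le_sum (f := fun j => (x j * s j - μ)^2)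
        (fun i _ => sq_nonneg _) (Finset.mem_univ j)) hE
    nlinarith [sq_nonneg (x j * s j - μ + θ*μ)]
  -- bound on ‖ξ‖²
  have hsq : (Real.sqrt n)^2 = n := Real.sq_sqrt (le_of_lt hn')
  have hsn : (0:ℝ) < Real.sqrt n := Real.sqrt_pos.mpr hn'
  have hXi : ∑ j, (ξ j)^2 ≤ (θ^2+β^2)*μ^2 := by
    have hsum2 : ∑ j, (ξ j)^2 = (∑ j, (x j * s j - μ)^2)
        + (2*((β/Real.sqrt n)*μ)) * (∑ j, (x j * s j - μ)) + n*((β/Real.sqrt n)*μ)^2 := by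
      rw [Finset.mul_sum, ← Finset.sum_add_distrib]
      rw [show (n:ℝ)*((β/Real.sqrt n)*μ)^2 = ∑ _j : Fin n, ((β/Real.sqrt n)*μ)^2 by
        rw [Finset.sum_const, Finset.card_univ, Fintype.card_fin, nsmul_eq_mul]]
      rw [← Finset.sum_add_distrib]
      refine Finset.sum_congr rfl fun j _ => ?_
      rw [hξ, hσ]; ring
    have hlast : (n:ℝ)*((β/Real.sqrt n)*μ)^2 = β^2*μ^2 := by
      field_simp
      nlinarith [hsq]
    rw [hsum2, hsum, hlast]
    nlinarith
  -- bound on ‖ξ + r‖²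
  have hXi0 : (0:ℝ) ≤ ∑ j, (ξ j)^2 := Finset.sum_nonneg fun i _ => sq_nonneg _
  have hR0 : (0:ℝ) ≤ ∑ j, (r j)^2 := Finset.sum_nonneg fun i _ => sq_nonneg _
  set a := Real.sqrt (∑ j, (ξ j)^2) with ha
  set b := Real.sqrt (∑ j, (r j)^2) with hb
  have ha0 : 0 ≤ a := Real.sqrt_nonneg _
  have hb0 : 0 ≤ b := Real.sqrt_nonneg _
  have haξ : a^2 = ∑ j, (ξ j)^2 := Real.sq_sqrt hXi0
  have har : b^2 = ∑ j, (r j)^2 := Real.sq_sqrt hR0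
  have hCS := Finset.sum_mul_sq_le_sq_mul_sq Finset.univ ξ r
  have hcross : ∑ j, ξ j * r j ≤ a * b := by
    have hsq2 : (∑ j, ξ j * r j)^2 ≤ (a*b)^2 := by
      rw [mul_pow, haξ, har]; exact hCS
    exact (abs_le_of_sq_le_sq' hsq2 (mul_nonneg ha0 hb0)).2
  have hexp : ∑ j, (ξ j + r j)^2 = ∑ j, (ξ j)^2 + 2 * ∑ j, ξ j * r j + ∑ j, (r j)^2 := by
    rw [Finset.mul_sum, ← Finset.sum_add_distrib, ← Finset.sum_add_distrib]
    exact Finset.sum_congr rfl fun j _ => by ring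
  have hba : b * b ≤ (δ*a) * (δ*a) :=
    mul_le_mul hr hr hb0 (by positivity)
  have hab : a * b ≤ a * (δ*a) := mul_le_mul_of_nonneg_left hr ha0
  have hP : ∑ j, (ξ j + r j)^2 ≤ (1+δ)^2 * ((θ^2+β^2)*μ^2) := by
    have h1'' : ∑ j, (ξ j + r j)^2 ≤ (1+δ)^2 * a^2 := by
      rw [hexp, ← haξ, ← har]
      nlinarith
    have h2'' : (1+δ)^2 * a^2 ≤ (1+δ)^2 * ((θ^2+β^2)*μ^2) := by
      have : a^2 ≤ (θ^2+β^2)*μ^2 := haξ ▸ hXi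
      nlinarith [sq_nonneg (1+δ)]
    linarith
  -- nonnegativity of Σ dx ds
  have hds : ∀ j, ds j = Q.mulVec dx j - Aᵀ.mulVec dy j := by
    intro j
    have := congrFun h2 j
    simp only [Pi.add_apply, Pi.neg_apply, Pi.zero_apply] at this
    linarith
  have hdot : ∑ j, dx j * ds j = dx ⬝ᵥ Q.mulVec dx - dx ⬝ᵥ Aᵀ.mulVec dy := by
    simp only [dotProduct]
    rw [← Finset.sum_sub_distrib]
    exact Finset.sum_congr rfl fun j _ => by rw [hds j]; ring
  have hzero : dx ⬝ᵥ Aᵀ.mulVec dy = 0 := by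
    rw [Matrix.dotProduct_mulVec, Matrix.vecMul_transpose, h1]
    simp
  have hQpos : 0 ≤ dx ⬝ᵥ Q.mulVec dx := by simpa using hQ.dotProduct_mulVec_nonneg dx
  have hnn : 0 ≤ ∑ j, dx j * ds j := by rw [hdot, hzero]; linarith
  -- pointwise bound
  have hpt : ∀ j, dx j * ds j ≤ (ξ j + r j)^2 / (4 * (x j * s j)) := by
    intro j
    rw [le_div_iff₀ (by have h := mul_pos (hx j) (hs j); linarith only [h])]
    have h3' := h3 j
    rw [← h3']
    nlinarith only [sq_nonneg (s j * dx j - x j * ds j)]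
  have hcpos : ∀ j, (0:ℝ) ≤ (ξ j + r j)^2 / (4 * (x j * s j)) := fun j =>
    div_nonneg (sq_nonneg _) (by have h := mul_pos (hx j) (hs j); linarith only [h])
  have habs : ∀ j, |dx j * ds j| ≤ 2 * ((ξ j + r j)^2 / (4 * (x j * s j))) - dx j * ds j := by
    intro j
    rcases abs_cases (dx j * ds j) with ⟨h, _⟩ | ⟨h, _⟩ <;> rw [h] <;>
      linarith only [hpt j, hcpos j]
  -- ℓ1 bound
  have hl1 : ∑ j, |dx j * ds j| ≤ 2 * ∑ j, (ξ j + r j)^2 / (4 * (x j * s j)) := by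
    calc ∑ j, |dx j * ds j|
        ≤ ∑ j, (2 * ((ξ j + r j)^2 / (4 * (x j * s j))) - dx j * ds j) :=
          Finset.sum_le_sum fun j _ => habs j
      _ = 2 * (∑ j, (ξ j + r j)^2 / (4 * (x j * s j))) - ∑ j, dx j * ds j := by
          rw [Finset.sum_sub_distrib, Finset.mul_sum]
      _ ≤ 2 * ∑ j, (ξ j + r j)^2 / (4 * (x j * s j)) := by linarith only [hnn]
  -- bound the sum of quotients
  have hterm : ∀ j, (ξ j + r j)^2 / (4 * (x j * s j)) ≤ (ξ j + r j)^2 / (4 * ((1-θ)*μ)) := by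
    intro j
    exact div_le_div_of_nonneg_left (sq_nonneg _)
      (by have h := mul_pos h1θ hμpos; linarith only [h]) (by linarith only [hlow j])
  have hsumq : ∑ j, (ξ j + r j)^2 / (4 * (x j * s j))
      ≤ (∑ j, (ξ j + r j)^2) / (4 * ((1-θ)*μ)) := by
    rw [Finset.sum_div]
    exact Finset.sum_le_sum fun j _ => hterm j
  have hD : (0:ℝ) < 4 * ((1-θ)*μ) := by have h := mul_pos h1θ hμpos; linarith only [h]
  have hfin : 2 * ∑ j, (ξ j + r j)^2 / (4 * (x j * s j))
      ≤ (1 + δ) ^ 2 * (θ ^ 2 + β ^ 2) * μ / (1 - θ) := by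
    have hq : 2 * ((∑ j, (ξ j + r j)^2) / (4 * ((1-θ)*μ)))
        ≤ 2 * (((1+δ)^2 * ((θ^2+β^2)*μ^2)) / (4 * ((1-θ)*μ))) := by
      gcongr
    have heq : 2 * (((1+δ)^2 * ((θ^2+β^2)*μ^2)) / (4 * ((1-θ)*μ)))
        = ((1 + δ) ^ 2 * (θ ^ 2 + β ^ 2) * μ / (1 - θ)) / 2 := by
      field_simp
      ring
    have hK : 0 ≤ (1 + δ) ^ 2 * (θ ^ 2 + β ^ 2) * μ / (1 - θ) :=
      div_nonneg (mul_nonneg (mul_nonneg (sq_nonneg _) (by positivity)) hμpos.le) h1θ.le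
    linarith only [hq, heq, hK, hsumq]
  -- ℓ2 ≤ ℓ1
  have h2n : Real.sqrt (∑ j, (dx j * ds j)^2) ≤ ∑ j, |dx j * ds j| := by
    have hsq' : ∑ j, (dx j * ds j)^2 = ∑ j, |dx j * ds j|^2 := by
      simp only [sq_abs]
    have hle : ∑ j, |dx j * ds j|^2 ≤ (∑ j, |dx j * ds j|)^2 :=
      Finset.sum_sq_le_sq_sum_of_nonneg fun i _ => abs_nonneg _
    calc Real.sqrt (∑ j, (dx j * ds j)^2) ≤ Real.sqrt ((∑ j, |dx j * ds j|)^2) := by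
          apply Real.sqrt_le_sqrt; rw [hsq']; exact hle
      _ = ∑ j, |dx j * ds j| :=
          Real.sqrt_sq (Finset.sum_nonneg fun i _ => abs_nonneg _)
  linarith only [h2n, hl1, hfin]
end

section
/- Let (x,y,s) ∈ N₂(θ) with θ = β = 0.1, δ = 0.3, σ = 1 - β/√n, n ≥ 2, μ = xᵀs/n > 0. Suppose (Δx,Δy,Δs) solves the inexact Newton system with ‖r‖₂ ≤ δ‖ξ‖₂, ξ = σμe - XSe, and ΔxᵀΔs ≥ 0. Then for every α ∈ (0,1], the point (x(α), s(α)) = (x + αΔx, s + αΔs) satisfies ‖X(α)S(α)e - μ(α)e‖₂ ≤ θ·μ(α), where μ(α) = x(α)ᵀs(α)/n. -/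
open Finset

private lemma mink2 {n : ℕ} (a b : Fin n → ℝ) :
    Real.sqrt (∑ j, (a j + b j)^2) ≤ Real.sqrt (∑ j, a j^2) + Real.sqrt (∑ j, b j^2) := by
  have h := norm_add_le ((WithLp.equiv 2 (Fin n → ℝ)).symm a) ((WithLp.equiv 2 (Fin n → ℝ)).symm b)
  simpa [EuclideanSpace.norm_eq, Real.norm_eq_abs, sq_abs, ← WithLp.toLp_add] using h

private lemma mink3 {n : ℕ} (a b c : Fin n → ℝ) :
    Real.sqrt (∑ j, (a j + b j + c j)^2)
      ≤ Real.sqrt (∑ j, a j^2) + Real.sqrt (∑ j, b j^2) + Real.sqrt (∑ j, c j^2) := by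
  have h1 := mink2 (fun j => a j + b j) c
  have h2 := mink2 a b
  have h3 : Real.sqrt (∑ j, (a j + b j + c j)^2)
      = Real.sqrt (∑ j, ((fun j => a j + b j) j + c j)^2) := rfl
  rw [h3]
  calc Real.sqrt (∑ j, ((fun j => a j + b j) j + c j)^2)
      ≤ Real.sqrt (∑ j, ((fun j => a j + b j) j)^2) + Real.sqrt (∑ j, c j^2) := h1
    _ ≤ _ := by simp only []; linarith

private lemma center_le {n : ℕ} (hn : 0 < n) (a : Fin n → ℝ) :
    ∑ j, (a j - (∑ i, a i)/n)^2 ≤ ∑ j, a j^2 := by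
  have hn' : ((n:ℝ)) ≠ 0 := by positivity
  have expand : ∀ j : Fin n, (a j - (∑ i, a i)/n)^2
      = a j^2 - (2*((∑ i, a i)/n))*a j + ((∑ i, a i)/n)^2 := fun j => by ring
  rw [Finset.sum_congr rfl (fun j _ => expand j), Finset.sum_add_distrib,
    Finset.sum_sub_distrib, ← Finset.mul_sum, Finset.sum_const, card_univ,
    Fintype.card_fin, nsmul_eq_mul]
  have h1 : (n:ℝ) * ((∑ i, a i)/n)^2 = (∑ i, a i)^2 / n := by field_simp
  have h2 : (2*((∑ i, a i)/n)) * (∑ i, a i) = 2 * ((∑ i, a i)^2/n) := by field_simp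
  rw [h1, h2]
  have : 0 ≤ (∑ i, a i)^2 / n := by positivity
  linarith

private lemma sqrt_sum_sq_smul {n : ℕ} (c : ℝ) (hc : 0 ≤ c) (a : Fin n → ℝ) :
    Real.sqrt (∑ j, (c * a j)^2) = c * Real.sqrt (∑ j, a j^2) := by
  rw [show (∑ j, (c*a j)^2) = c^2 * ∑ j, a j^2 by
    rw [Finset.mul_sum]; exact Finset.sum_congr rfl fun j _ => by ring]
  rw [Real.sqrt_mul (sq_nonneg c), Real.sqrt_sq hc]

set_option maxHeartbeats 2000000 in
/-- Lemma 3.2: with θ = β = 0.1 and δ = 0.3, any step α ∈ (0,1] in the inexact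
Newton direction keeps the iterate in the N₂(θ) neighbourhood. -/
theorem inexact_newton_step_stays_in_N2
    {n : ℕ} (hn : 2 ≤ n)
    (x s dx ds ξ r : Fin n → ℝ) (μ σ : ℝ)
    (hx : ∀ j, 0 < x j) (hs : ∀ j, 0 < s j)
    (hμ : μ = (∑ j, x j * s j) / n) (hμpos : 0 < μ)
    (hσ : σ = 1 - 0.1 / Real.sqrt n)
    (hN2 : Real.sqrt (∑ j, (x j * s j - μ) ^ 2) ≤ 0.1 * μ)
    (hξ : ∀ j, ξ j = σ * μ - x j * s j)
    (h3 : ∀ j, s j * dx j + x j * ds j = ξ j + r j)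
    (hr : Real.sqrt (∑ j, (r j) ^ 2) ≤ 0.3 * Real.sqrt (∑ j, (ξ j) ^ 2))
    (hdxds : 0 ≤ ∑ j, dx j * ds j) :
    ∀ α : ℝ, 0 < α → α ≤ 1 →
      Real.sqrt (∑ j, ((x j + α * dx j) * (s j + α * ds j)
          - (∑ i, (x i + α * dx i) * (s i + α * ds i)) / n) ^ 2)
        ≤ 0.1 * ((∑ i, (x i + α * dx i) * (s i + α * ds i)) / n) := by
  intro α hα hα1
  have hnpos : 0 < n := by omega
  have hnR : (0:ℝ) < n := by exact_mod_cast hnpos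
  have hnR2 : (2:ℝ) ≤ n := by exact_mod_cast hn
  set sn := Real.sqrt n with hsndef
  have hsn2 : sn^2 = n := Real.sq_sqrt (le_of_lt hnR)
  have hsnpos : 0 < sn := Real.sqrt_pos.mpr hnR
  have hsn_lb : 1.4142 ≤ sn := by nlinarith [hsn2, hsnpos.le, hnR2]
  -- basic sums
  have SW : ∑ j, x j * s j = n * μ := by rw [hμ]; field_simp
  have hsum0 : ∑ j, (x j * s j - μ) = 0 := by
    rw [Finset.sum_sub_distrib, SW, Finset.sum_const, card_univ, Fintype.card_fin,
      nsmul_eq_mul]; ring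
  -- the norm of w - μ e
  have hE0 : (0:ℝ) ≤ ∑ j, (x j * s j - μ)^2 := by positivity
  have hEle : ∑ j, (x j * s j - μ)^2 ≤ (0.1*μ)^2 := by
    have h1 : Real.sqrt (∑ j, (x j * s j - μ)^2) ^ 2 ≤ (0.1*μ)^2 :=
      pow_le_pow_left₀ (Real.sqrt_nonneg _) hN2 2
    rwa [Real.sq_sqrt hE0] at h1
  have hwlow : ∀ j, 0.9 * μ ≤ x j * s j := by
    intro j
    have h1 : (x j * s j - μ)^2 ≤ ∑ i, (x i * s i - μ)^2 :=
      Finset.single_le_sum (f := fun i => (x i * s i - μ)^2) (fun i _ => sq_nonneg _) (Finset.mem_univ j)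
    nlinarith [hμpos]
  -- norm of ξ
  have hσ1 : (σ - 1)^2 * (n:ℝ) = 0.01 := by
    rw [hσ]; rw [← hsn2]; field_simp; ring
  have hΞeq : ∑ j, ξ j ^ 2 = 0.01*μ^2 + ∑ j, (x j * s j - μ)^2 := by
    have expand : ∀ j : Fin n, ξ j ^2
        = ((σ-1)*μ)^2 - (2*((σ-1)*μ))*(x j*s j - μ) + (x j*s j-μ)^2 := by
      intro j; rw [hξ j]; ring
    rw [Finset.sum_congr rfl (fun j _ => expand j), Finset.sum_add_distrib,
      Finset.sum_sub_distrib, ← Finset.mul_sum, hsum0, Finset.sum_const, card_univ,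
      Fintype.card_fin, nsmul_eq_mul]
    nlinarith [hσ1]
  have hΞ0 : (0:ℝ) ≤ ∑ j, ξ j ^2 := by positivity
  have hq : Real.sqrt (∑ j, ξ j ^2) ≤ 0.1415 * μ := by
    have h1 : ∑ j, ξ j ^2 ≤ (0.1415*μ)^2 := by nlinarith [hΞeq, hEle, hμpos]
    calc Real.sqrt (∑ j, ξ j ^2) ≤ Real.sqrt ((0.1415*μ)^2) := Real.sqrt_le_sqrt h1
      _ = 0.1415*μ := Real.sqrt_sq (by positivity)
  have hρ0 : (0:ℝ) ≤ Real.sqrt (∑ j, r j ^2) := Real.sqrt_nonneg _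
  have hρ : Real.sqrt (∑ j, r j ^2) ≤ 0.04245 * μ := by nlinarith [hr, hq, Real.sqrt_nonneg (∑ j, ξ j ^2)]
  have hR0 : (0:ℝ) ≤ ∑ j, r j ^2 := by positivity
  have hRle : ∑ j, r j ^2 ≤ (0.04245*μ)^2 := by
    have h1 := pow_le_pow_left₀ hρ0 hρ 2
    rwa [Real.sq_sqrt hR0] at h1
  -- norm of t = ξ + r
  have hT : Real.sqrt (∑ j, (ξ j + r j)^2) ≤ 0.18395 * μ := by
    have := mink2 ξ r
    calc Real.sqrt (∑ j, (ξ j + r j)^2)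
        ≤ Real.sqrt (∑ j, ξ j^2) + Real.sqrt (∑ j, r j^2) := this
      _ ≤ 0.1415*μ + 0.04245*μ := by linarith
      _ = 0.18395*μ := by ring
  have hT0 : (0:ℝ) ≤ ∑ j, (ξ j + r j)^2 := by positivity
  have hTle : ∑ j, (ξ j + r j)^2 ≤ (0.18395*μ)^2 := by
    have h1 := pow_le_pow_left₀ (Real.sqrt_nonneg _) hT 2
    rwa [Real.sq_sqrt hT0] at h1
  -- product bound: g j := t_j^2/(1.8 μ) - dx_j ds_j dominates |dx_j ds_j|
  have h18 : (0:ℝ) < 1.8 * μ := by linarith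
  have hg1 : ∀ j, dx j * ds j ≤ (ξ j + r j)^2/(1.8*μ) - dx j * ds j := by
    intro j
    rw [le_sub_iff_add_le, le_div_iff₀ h18]
    have t2eq : (ξ j + r j)^2 = (s j*dx j + x j*ds j)^2 := by rw [h3 j]
    rcases le_or_gt 0 (dx j * ds j) with hc | hc
    · nlinarith [t2eq, sq_nonneg (s j * dx j - x j * ds j),
        mul_nonneg (sub_nonneg.mpr (hwlow j)) hc, hμpos]
    · nlinarith [t2eq, sq_nonneg (s j * dx j + x j * ds j),
        mul_pos hμpos (neg_pos.mpr hc)]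
  have hg2 : ∀ j, -(dx j * ds j) ≤ (ξ j + r j)^2/(1.8*μ) - dx j * ds j := by
    intro j
    have : (0:ℝ) ≤ (ξ j + r j)^2/(1.8*μ) := by positivity
    linarith
  have hg0 : ∀ j, 0 ≤ (ξ j + r j)^2/(1.8*μ) - dx j * ds j := by
    intro j; have := hg1 j; have := hg2 j; linarith
  -- bound on ∑ (dx ds)^2
  have hSg : ∑ j, ((ξ j + r j)^2/(1.8*μ) - dx j * ds j)
      = (∑ j, (ξ j + r j)^2)/(1.8*μ) - ∑ j, dx j * ds j := by
    rw [Finset.sum_sub_distrib, Finset.sum_div]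
  have hSgle : ∑ j, ((ξ j + r j)^2/(1.8*μ) - dx j * ds j) ≤ 0.0188 * μ := by
    rw [hSg]
    have h1 : (∑ j, (ξ j + r j)^2)/(1.8*μ) ≤ 0.0188*μ := by
      rw [div_le_iff₀ h18]; nlinarith [hTle, hμpos]
    linarith
  have hSg0 : 0 ≤ ∑ j, ((ξ j + r j)^2/(1.8*μ) - dx j * ds j) :=
    Finset.sum_nonneg (fun j _ => hg0 j)
  have hP2le : ∑ j, (dx j * ds j)^2 ≤ (0.0188*μ)^2 := by
    have h1 : ∑ j, (dx j * ds j)^2 ≤ ∑ j, ((ξ j + r j)^2/(1.8*μ) - dx j * ds j)^2 := by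
      apply Finset.sum_le_sum
      intro j _
      exact sq_le_sq' (by linarith [hg2 j]) (hg1 j)
    have h2 : ∑ j, ((ξ j + r j)^2/(1.8*μ) - dx j * ds j)^2
        ≤ (∑ j, ((ξ j + r j)^2/(1.8*μ) - dx j * ds j))^2 :=
      Finset.sum_sq_le_sq_sum_of_nonneg (fun j _ => hg0 j)
    nlinarith [hSgle, hSg0]
  have hP2sqrt : Real.sqrt (∑ j, (dx j * ds j)^2) ≤ 0.0188 * μ := by
    calc Real.sqrt (∑ j, (dx j * ds j)^2) ≤ Real.sqrt ((0.0188*μ)^2) :=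
        Real.sqrt_le_sqrt hP2le
      _ = 0.0188*μ := Real.sqrt_sq (by positivity)
  -- sum of ξ
  have hsum_ξ : ∑ j, ξ j = (n:ℝ) * (σ - 1) * μ := by
    rw [Finset.sum_congr rfl (fun j _ => hξ j), Finset.sum_sub_distrib, SW,
      Finset.sum_const, card_univ, Fintype.card_fin, nsmul_eq_mul]
    ring
  -- bound on ∑ r
  have hSr : -(sn * Real.sqrt (∑ j, r j ^2)) ≤ ∑ j, r j := by
    have h1 : (∑ j, r j)^2 ≤ (n:ℝ) * ∑ j, r j ^2 := by
      have := sq_sum_le_card_mul_sum_sq (s := (Finset.univ : Finset (Fin n))) (f := r)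
      simpa [card_univ, Fintype.card_fin] using this
    have h2 : (sn * Real.sqrt (∑ j, r j ^2))^2 = (n:ℝ) * ∑ j, r j ^2 := by
      rw [mul_pow, hsn2, Real.sq_sqrt hR0]
    have h3' : (∑ j, r j)^2 ≤ (sn * Real.sqrt (∑ j, r j ^2))^2 := by rw [h2]; exact h1
    exact (abs_le_of_sq_le_sq' h3' (mul_nonneg hsnpos.le hρ0)).1
  -- (σ-1)μ lower bound
  have hσμ : -(0.0708*μ) ≤ (σ - 1)*μ := by
    rw [hσ]
    have h1 : 0.1/sn ≤ 0.0708 := by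
      rw [div_le_iff₀ hsnpos]; linarith [hsn_lb]
    have h2 := mul_le_mul_of_nonneg_right h1 hμpos.le
    have h3' : (1 - 0.1/sn - 1)*μ = -(0.1/sn*μ) := by ring
    rw [h3']; linarith
  -- total sum identity
  have hS : ∑ i, (x i + α*dx i)*(s i + α*ds i)
      = (n:ℝ)*μ + α*((n:ℝ)*(σ-1)*μ + ∑ j, r j) + α^2 * ∑ j, dx j * ds j := by
    have expand : ∀ i : Fin n, (x i + α*dx i)*(s i + α*ds i)
        = x i * s i + α*(ξ i + r i) + α^2*(dx i * ds i) := by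
      intro i; linear_combination α * h3 i
    rw [Finset.sum_congr rfl (fun i _ => expand i), Finset.sum_add_distrib,
      Finset.sum_add_distrib, ← Finset.mul_sum, ← Finset.mul_sum, SW,
      Finset.sum_add_distrib, ← hsum_ξ]
  -- lower bound on the new duality measure
  have hμα : μ - 0.0708*α*μ - 0.7072*α*Real.sqrt (∑ j, r j ^2)
      ≤ (∑ i, (x i + α*dx i)*(s i + α*ds i))/n := by
    rw [hS]
    have heq : ((n:ℝ)*μ + α*((n:ℝ)*(σ-1)*μ + ∑ j, r j) + α^2 * ∑ j, dx j * ds j)/n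
        = μ + α*((σ-1)*μ) + α*((∑ j, r j)/n) + α^2*((∑ j, dx j * ds j)/n) := by
      field_simp; ring
    rw [heq]
    have h1 : -(0.7072*Real.sqrt (∑ j, r j ^2)) ≤ (∑ j, r j)/n := by
      rw [le_div_iff₀ hnR, ← hsn2]
      have hp : 0 ≤ sn * Real.sqrt (∑ j, r j ^2) * (0.7072*sn - 1) :=
        mul_nonneg (mul_nonneg hsnpos.le hρ0) (by linarith [hsn_lb])
      nlinarith only [hSr, hp]
    have h2 : 0 ≤ α^2*((∑ j, dx j * ds j)/n) := by positivity
    have p1 := mul_le_mul_of_nonneg_left hσμ hα.le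
    have p2 := mul_le_mul_of_nonneg_left h1 hα.le
    linarith only [p1, p2, h2]
  -- per-component identity for the deviation vector
  have hperj : ∀ j, (x j + α*dx j)*(s j + α*ds j)
        - (∑ i, (x i + α*dx i)*(s i + α*ds i))/n
      = (1-α)*(x j*s j - μ) + α*(r j - (∑ i, r i)/n)
        + α^2*(dx j*ds j - (∑ i, dx i * ds i)/n) := by
    intro j
    rw [hS]
    have h3j := h3 j
    have hξj := hξ j
    field_simp
    linear_combination (↑n * α) * h3j + (↑n * α) * hξj
  -- assemble
  have hgoalsum : (∑ j, ((x j + α*dx j)*(s j + α*ds j)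
        - (∑ i, (x i + α*dx i)*(s i + α*ds i))/n)^2)
      = ∑ j, ((1-α)*(x j*s j - μ) + α*(r j - (∑ i, r i)/n)
        + α^2*(dx j*ds j - (∑ i, dx i * ds i)/n))^2 :=
    Finset.sum_congr rfl (fun j _ => by rw [hperj j])
  have hmink := mink3 (fun j => (1-α)*(x j*s j - μ))
      (fun j => α*(r j - (∑ i, r i)/n)) (fun j => α^2*(dx j*ds j - (∑ i, dx i * ds i)/n))
  rw [hgoalsum]
  have e1 : Real.sqrt (∑ j, ((1-α)*(x j*s j - μ))^2)
      = (1-α) * Real.sqrt (∑ j, (x j*s j - μ)^2) :=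
    sqrt_sum_sq_smul (1-α) (by linarith) _
  have e2 : Real.sqrt (∑ j, (α*(r j - (∑ i, r i)/n))^2)
      = α * Real.sqrt (∑ j, (r j - (∑ i, r i)/n)^2) :=
    sqrt_sum_sq_smul α hα.le _
  have e3 : Real.sqrt (∑ j, (α^2*(dx j*ds j - (∑ i, dx i * ds i)/n))^2)
      = α^2 * Real.sqrt (∑ j, (dx j*ds j - (∑ i, dx i * ds i)/n)^2) :=
    sqrt_sum_sq_smul (α^2) (sq_nonneg α) _
  have c2 : Real.sqrt (∑ j, (r j - (∑ i, r i)/n)^2) ≤ Real.sqrt (∑ j, r j ^2) :=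
    Real.sqrt_le_sqrt (center_le hnpos r)
  have c3 : Real.sqrt (∑ j, (dx j*ds j - (∑ i, dx i * ds i)/n)^2)
      ≤ Real.sqrt (∑ j, (dx j * ds j)^2) := by
    have := center_le hnpos (fun j => dx j * ds j)
    exact Real.sqrt_le_sqrt this
  have hEnn := Real.sqrt_nonneg (∑ j, (x j * s j - μ)^2)
  have c3' : Real.sqrt (∑ j, (dx j*ds j - (∑ i, dx i * ds i)/n)^2) ≤ 0.0188*μ :=
    le_trans c3 hP2sqrt
  calc Real.sqrt (∑ j, ((1-α)*(x j*s j - μ) + α*(r j - (∑ i, r i)/n)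
        + α^2*(dx j*ds j - (∑ i, dx i * ds i)/n))^2)
      ≤ Real.sqrt (∑ j, ((1-α)*(x j*s j - μ))^2)
        + Real.sqrt (∑ j, (α*(r j - (∑ i, r i)/n))^2)
        + Real.sqrt (∑ j, (α^2*(dx j*ds j - (∑ i, dx i * ds i)/n))^2) := hmink
    _ ≤ (1-α)*(0.1*μ) + α*Real.sqrt (∑ j, r j ^2) + α^2*(0.0188*μ) := by
        rw [e1, e2, e3]
        have t1 : (1-α) * Real.sqrt (∑ j, (x j*s j - μ)^2) ≤ (1-α)*(0.1*μ) :=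
          mul_le_mul_of_nonneg_left hN2 (by linarith)
        have t2 : α * Real.sqrt (∑ j, (r j - (∑ i, r i)/n)^2)
            ≤ α * Real.sqrt (∑ j, r j ^2) :=
          mul_le_mul_of_nonneg_left c2 hα.le
        have t3 : α^2 * Real.sqrt (∑ j, (dx j*ds j - (∑ i, dx i * ds i)/n)^2)
            ≤ α^2*(0.0188*μ) :=
          mul_le_mul_of_nonneg_left c3' (sq_nonneg α)
        linarith only [t1, t2, t3]
    _ ≤ 0.1 * ((∑ i, (x i + α*dx i)*(s i + α*ds i))/n) := by
        have pa : α * Real.sqrt (∑ j, r j ^2) ≤ α * (0.04245*μ) :=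
          mul_le_mul_of_nonneg_left hρ hα.le
        have pb : 0 ≤ α * (1-α) * μ :=
          mul_nonneg (mul_nonneg hα.le (by linarith)) hμpos.le
        have pc : 0 ≤ α * μ := mul_nonneg hα.le hμpos.le
        have pd : 0 ≤ α * (1-α) * Real.sqrt (∑ j, r j ^2) :=
          mul_nonneg (mul_nonneg hα.le (by linarith)) hρ0
        linarith only [hμα, pa, pb, pc, pd]
end

section
/- Under the hypotheses of the short-step method with θ = β = 0.1, δ = 0.3, σ = 1 - β/√n, after a full Newton step (α = 1), the new average complementarity gap satisfies μ̄ = σμ + eᵀr/n + ΔxᵀΔs/n ≤ (1 - 0.002/√n)·μ. -/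
open Finset

/-- After a full Newton step in the short-step method, the new average
complementarity gap satisfies μ̄ ≤ (1 - 0.002/√n)μ. -/
theorem full_step_gap_reduction_short_step
    {n : ℕ} (hn : 2 ≤ n) (dx ds r : Fin n → ℝ) (μ σ : ℝ)
    (hμpos : 0 < μ)
    (hσ : σ = 1 - 0.1 / Real.sqrt n)
    (hetr : |(∑ j, r j) / n| ≤ Real.sqrt 2 * 0.3 * 0.1 * μ / Real.sqrt n)
    (hdxds : (∑ j, dx j * ds j) / n ≤ 0.38 * 0.1 * μ / Real.sqrt n) :
    σ * μ + (∑ j, r j) / n + (∑ j, dx j * ds j) / n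
      ≤ (1 - 0.002 / Real.sqrt n) * μ := by
  have hs : (0:ℝ) < Real.sqrt n := Real.sqrt_pos.2 (by positivity)
  have hr2 : Real.sqrt 2 ≤ 1.415 := by
    rw [show (1.415:ℝ) = Real.sqrt (1.415^2) by
      rw [Real.sqrt_sq (by norm_num)]]
    exact Real.sqrt_le_sqrt (by norm_num)
  have h1 : (∑ j, r j) / n ≤ 1.415 * 0.3 * 0.1 * μ / Real.sqrt n := by
    calc (∑ j, r j) / n ≤ |(∑ j, r j) / n| := le_abs_self _
      _ ≤ Real.sqrt 2 * 0.3 * 0.1 * μ / Real.sqrt n := hetr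
      _ ≤ 1.415 * 0.3 * 0.1 * μ / Real.sqrt n := by
          gcongr
  rw [hσ]
  have key : (1.415 * 0.3 * 0.1 * μ) / Real.sqrt n + 0.38 * 0.1 * μ / Real.sqrt n
      ≤ (0.1 - 0.002) * μ / Real.sqrt n := by
    rw [← add_div]
    gcongr
    nlinarith
  have := add_le_add h1 hdxds
  have h2 := le_trans this key
  have : (0.1 - 0.002) * μ / Real.sqrt n = 0.1 / Real.sqrt n * μ - 0.002 / Real.sqrt n * μ := by
    field_simp
  nlinarith [this, h2]
end

section
/- Let (x,y,s) ∈ N_S(γ), μ = xᵀs/n > 0, and let (Δx,Δy,Δs) be an inexact Newton direction with SΔx + XΔs = σμe - XSe + r, ‖r‖_∞ ≤ δ(1/γ - σ)μ, ΔxᵀΔs ≥ 0, and the bounds of Lemma 3.4 holding. If α ∈ (0,1] satisfies α(γ+n)((1+δ)²/γ)(1/γ-σ)² ≤ σ(1-γ) - δ(1+γ)(1/γ-σ) and δ(1+1/γ)(1/γ-σ) + α((1+δ)²/γ)(1/γ-σ)² ≤ (1/γ - 1)σ, then the new point (x+αΔx, s+αΔs) satisfies γμ(α) ≤ x_j(α)s_j(α)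 ≤ μ(α)/γ for all j, where μ(α) = (x+αΔx)ᵀ(s+αΔs)/n. -/
open Finset

set_option maxHeartbeats 1000000 in
/-- Lemma 3.5: under the stepsize conditions, the new iterate stays in the
symmetric neighbourhood N_S(γ). -/
theorem long_step_stays_in_NS
    {n : ℕ} (hn : 0 < n)
    (x s dx ds r : Fin n → ℝ) (μ γ σ δ α : ℝ)
    (hx : ∀ j, 0 < x j) (hs : ∀ j, 0 < s j)
    (hμ : μ = (∑ j, x j * s j) / n) (hμpos : 0 < μ)
    (hγ : γ ∈ Set.Ioo (0 : ℝ) 1) (hσ : σ ∈ Set.Ioo (0 : ℝ) 1)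
    (hδ : δ ∈ Set.Ioo (0 : ℝ) 1)
    (hNS : ∀ j, γ * μ ≤ x j * s j ∧ x j * s j ≤ μ / γ)
    (h3 : ∀ j, s j * dx j + x j * ds j = σ * μ - x j * s j + r j)
    (hr : ∀ j, |r j| ≤ δ * (1 / γ - σ) * μ)
    (hdxds : 0 ≤ ∑ j, dx j * ds j)
    (hd1 : ∑ j, |dx j * ds j| ≤ n * ((1 + δ) ^ 2 / γ) * (1 / γ - σ) ^ 2 * μ)
    (hd2 : ∀ j, dx j * ds j ≤ ((1 + δ) ^ 2 / γ) * (1 / γ - σ) ^ 2 * μ)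
    (hα : α ∈ Set.Ioc (0 : ℝ) 1)
    (hcnd1 : α * (γ + n) * ((1 + δ) ^ 2 / γ) * (1 / γ - σ) ^ 2
        ≤ σ * (1 - γ) - δ * (1 + γ) * (1 / γ - σ))
    (hcnd2 : δ * (1 + 1 / γ) * (1 / γ - σ)
        + α * ((1 + δ) ^ 2 / γ) * (1 / γ - σ) ^ 2 ≤ (1 / γ - 1) * σ) :
    ∀ j, γ * ((∑ i, (x i + α * dx i) * (s i + α * ds i)) / n)
          ≤ (x j + α * dx j) * (s j + α * ds j) ∧
        (x j + α * dx j) * (s j + α * ds j)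
          ≤ ((∑ i, (x i + α * dx i) * (s i + α * ds i)) / n) / γ := by
  obtain ⟨hγ0, hγ1⟩ := hγ
  obtain ⟨hσ0, hσ1⟩ := hσ
  obtain ⟨hδ0, hδ1⟩ := hδ
  obtain ⟨hα0, hα1⟩ := hα
  have hn' : (0:ℝ) < n := by exact_mod_cast hn
  rw [eq_div_iff hn'.ne'] at hμ
  have hterm : ∀ i, (x i + α * dx i) * (s i + α * ds i)
      = (1 - α) * (x i * s i) + α * (σ * μ) + α * r i
        + α ^ 2 * (dx i * ds i) := by
    intro i
    linear_combination α * h3 i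
  have hSn : ∑ i, (x i + α * dx i) * (s i + α * ds i)
      = (1 - α) * (μ * n) + α * (σ * μ) * n + α * (∑ i, r i)
        + α ^ 2 * (∑ i, dx i * ds i) := by
    simp_rw [hterm]
    rw [Finset.sum_add_distrib, Finset.sum_add_distrib, Finset.sum_add_distrib]
    simp only [← Finset.mul_sum, Finset.sum_const, Finset.card_univ,
      Fintype.card_fin, nsmul_eq_mul]
    rw [← hμ]
    ring
  set C : ℝ := ((1 + δ) ^ 2 / γ) * (1 / γ - σ) ^ 2 with hCdef
  have hSRub : ∑ i, r i ≤ n * (δ * (1 / γ - σ) * μ) := by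
    calc ∑ i, r i ≤ ∑ i, |r i| :=
          Finset.sum_le_sum fun i _ => le_abs_self _
      _ ≤ ∑ _i : Fin n, (δ * (1 / γ - σ) * μ) :=
          Finset.sum_le_sum fun i _ => hr i
      _ = n * (δ * (1 / γ - σ) * μ) := by
          rw [Finset.sum_const, Finset.card_univ, Fintype.card_fin, nsmul_eq_mul]
  have hSRlb : -(n * (δ * (1 / γ - σ) * μ)) ≤ ∑ i, r i := by
    calc -(n * (δ * (1 / γ - σ) * μ))
        = ∑ _i : Fin n, -(δ * (1 / γ - σ) * μ) := by
          rw [Finset.sum_const, Finset.card_univ, Fintype.card_fin, nsmul_eq_mul]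
          ring
      _ ≤ ∑ i, r i := Finset.sum_le_sum fun i _ => neg_le_of_abs_le (hr i)
  have hSDub : ∑ i, dx i * ds i ≤ n * (C * μ) := by
    calc ∑ i, dx i * ds i ≤ ∑ i, |dx i * ds i| :=
          Finset.sum_le_sum fun i _ => le_abs_self _
      _ ≤ n * ((1 + δ) ^ 2 / γ) * (1 / γ - σ) ^ 2 * μ := hd1
      _ = n * (C * μ) := by rw [hCdef]; ring
  have hDlb : ∀ j, -(n * (C * μ)) ≤ dx j * ds j := by
    intro j
    have h1 : |dx j * ds j| ≤ ∑ i, |dx i * ds i| :=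
      Finset.single_le_sum (f := fun i => |dx i * ds i|)
        (fun i _ => abs_nonneg _) (Finset.mem_univ j)
    have h2 : ∑ i, |dx i * ds i| ≤ n * (C * μ) := by
      calc ∑ i, |dx i * ds i|
          ≤ n * ((1 + δ) ^ 2 / γ) * (1 / γ - σ) ^ 2 * μ := hd1
        _ = n * (C * μ) := by rw [hCdef]; ring
    have := neg_abs_le (dx j * ds j)
    linarith
  have hγσ : 0 < 1 / γ - σ := by
    have : (1:ℝ) < 1 / γ := one_lt_one_div hγ0 hγ1
    linarith
  have hC0 : 0 ≤ C := by
    rw [hCdef]; positivity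
  have hcnd2' : δ * (1 + γ) * (1 / γ - σ) + α * (γ * C) ≤ (1 - γ) * σ := by
    have h := mul_le_mul_of_nonneg_left hcnd2 hγ0.le
    have e1 : γ * (δ * (1 + 1 / γ) * (1 / γ - σ) + α * ((1 + δ) ^ 2 / γ) * (1 / γ - σ) ^ 2)
        = δ * (1 + γ) * (1 / γ - σ) + α * (γ * C) := by
      rw [hCdef]; field_simp; ring
    have e2 : γ * ((1 / γ - 1) * σ) = (1 - γ) * σ := by
      field_simp
    rw [e1, e2] at h
    exact h
  intro j
  have hγxs : x j * s j * γ ≤ μ := (le_div_iff₀ hγ0).mp (hNS j).2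
  have hrj_ub : r j ≤ δ * (1 / γ - σ) * μ := le_of_abs_le (hr j)
  have hrj_lb : -(δ * (1 / γ - σ) * μ) ≤ r j := neg_le_of_abs_le (hr j)
  constructor
  · -- lower bound
    rw [hSn, hterm j, ← mul_div_assoc, div_le_iff₀ hn']
    have hA : 0 ≤ (1 - α) * n * (x j * s j - γ * μ) :=
      mul_nonneg (mul_nonneg (by linarith) hn'.le) (by linarith [(hNS j).1])
    have hB : 0 ≤ α * n * (r j + δ * (1 / γ - σ) * μ) :=
      mul_nonneg (mul_nonneg hα0.le hn'.le) (by linarith)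
    have hC1 : 0 ≤ γ * α * (n * (δ * (1 / γ - σ) * μ) - ∑ i, r i) :=
      mul_nonneg (mul_nonneg hγ0.le hα0.le) (by linarith)
    have hD : 0 ≤ α ^ 2 * n * (dx j * ds j + n * (C * μ)) :=
      mul_nonneg (mul_nonneg (sq_nonneg _) hn'.le) (by linarith [hDlb j])
    have hE : 0 ≤ γ * α ^ 2 * (n * (C * μ) - ∑ i, dx i * ds i) :=
      mul_nonneg (mul_nonneg hγ0.le (sq_nonneg _)) (by linarith)
    have hF : 0 ≤ α * n * μ *
        (σ * (1 - γ) - δ * (1 + γ) * (1 / γ - σ) - α * (γ + n) * C) :=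
      mul_nonneg (mul_nonneg (mul_nonneg hα0.le hn'.le) hμpos.le)
        (by rw [hCdef]; linarith [hcnd1])
    linarith
  · -- upper bound
    rw [hSn, hterm j, div_div, le_div_iff₀ (by positivity : (0:ℝ) < (n:ℝ) * γ)]
    have hA : 0 ≤ (1 - α) * n * (μ - x j * s j * γ) :=
      mul_nonneg (mul_nonneg (by linarith) hn'.le) (by linarith)
    have hB : 0 ≤ α * ((∑ i, r i) + n * (δ * (1 / γ - σ) * μ)) :=
      mul_nonneg hα0.le (by linarith)
    have hC1 : 0 ≤ γ * α * n * (δ * (1 / γ - σ) * μ - r j) :=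
      mul_nonneg (mul_nonneg (mul_nonneg hγ0.le hα0.le) hn'.le) (by linarith)
    have hD : 0 ≤ α ^ 2 * ∑ i, dx i * ds i :=
      mul_nonneg (sq_nonneg _) hdxds
    have hE : 0 ≤ γ * α ^ 2 * n * (C * μ - dx j * ds j) :=
      mul_nonneg (mul_nonneg (mul_nonneg hγ0.le (sq_nonneg _)) hn'.le)
        (by linarith [hd2 j])
    have hF : 0 ≤ α * n * μ *
        ((1 - γ) * σ - δ * (1 + γ) * (1 / γ - σ) - α * (γ * C)) :=
      mul_nonneg (mul_nonneg (mul_nonneg hα0.le hn'.le) hμpos.le)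
        (by linarith [hcnd2'])
    linarith
end

section
/- Under the long-step assumptions, if α ∈ (0,1] satisfies σ + δ(1/γ - σ) + α((1+δ)²/γ)(1/γ - σ)² ≤ 0.9, then μ(α) = (1 - α(1-σ))μ + α·eᵀr/n + α²·ΔxᵀΔs/n ≤ (1 - 0.1α)·μ. -/
open Finset

/-- Lemma 3.6: sufficient reduction of the duality gap in the long-step method. -/
theorem long_step_gap_reduction
    {n : ℕ} (hn : 0 < n) (dx ds r : Fin n → ℝ) (μ γ σ δ α : ℝ)
    (hμpos : 0 < μ)
    (hγ : γ ∈ Set.Ioo (0 : ℝ) 1) (hσ : σ ∈ Set.Ioo (0 : ℝ) 1)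
    (hδ : δ ∈ Set.Ioo (0 : ℝ) 1) (hα : α ∈ Set.Ioc (0 : ℝ) 1)
    (hetr : |(∑ j, r j) / n| ≤ δ * (1 / γ - σ) * μ)
    (hdxds1 : (∑ j, dx j * ds j) / n ≤ ((1 + δ) ^ 2 / γ) * (1 / γ - σ) ^ 2 * μ)
    (hdxds2 : 0 ≤ ∑ j, dx j * ds j)
    (hcnd : σ + δ * (1 / γ - σ) + α * ((1 + δ) ^ 2 / γ) * (1 / γ - σ) ^ 2 ≤ 0.9) :
    (1 - α * (1 - σ)) * μ + α * ((∑ j, r j) / n)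
        + α ^ 2 * ((∑ j, dx j * ds j) / n)
      ≤ (1 - 0.1 * α) * μ := by
  obtain ⟨hα0, hα1⟩ := hα
  have h1 : (∑ j, r j) / n ≤ δ * (1 / γ - σ) * μ := (abs_le.mp hetr).2
  have hB : 0 ≤ ((1 + δ) ^ 2 / γ) * (1 / γ - σ) ^ 2 :=
    mul_nonneg (div_nonneg (by positivity) hγ.1.le) (sq_nonneg _)
  nlinarith [mul_le_mul_of_nonneg_left h1 hα0.le,
    mul_le_mul_of_nonneg_left hdxds1 (mul_nonneg hα0.le hα0.le),
    mul_le_mul_of_nonneg_left hcnd (mul_pos hα0 hμpos).le,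
    mul_nonneg (mul_nonneg hα0.le hμpos.le) (mul_nonneg hB (sub_nonneg.mpr hα1)),
    sq_nonneg α]
end
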